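/- For all real numbers x, y ≥ 0 and every real p ≥ 2, one has |x^p - y^p| ≤ p·|x - y|·√(x^(2p-2) + y^(2p-2)). -/
import Mathlib

private lemma key_ineq {p : ℝ} (hp : 1 ≤ p) {a b : ℝ} (hb : 0 ≤ b) (hba : b ≤ a) :
    a ^ p - b ^ p ≤ p * a ^ (p - 1) * (a - b) := by
  have ha : 0 ≤ a := hb.trans hba
  rcases eq_or_lt_of_le ha with h0 | hapos
  · rw [← h0] at hba
    have hb0 : b = 0 := le_antisymm hba hb
    subst hb0
    rw [← h0]
    simp
  · have hs : (-1 : ℝ) ≤ b / a - 1 := by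
      have : 0 ≤ b / a := div_nonneg hb ha
      linarith
    have hB := one_add_mul_self_le_rpow_one_add hs hp
    rw [add_sub_cancel] at hB
    have hdiv : (b / a) ^ p = b ^ p / a ^ p := Real.div_rpow hb ha p
    rw [hdiv] at hB
    have hap : 0 < a ^ p := Real.rpow_pos_of_pos hapos p
    have hB2 : (1 + p * (b / a - 1)) * a ^ p ≤ b ^ p := (le_div_iff₀ hap).mp hB
    have hpow : a ^ (p - 1) * a = a ^ p := by
      rw [← Real.rpow_add_one hapos.ne' (p - 1), sub_add_cancel]
    have hpow2 : a ^ (p - 1) * b = (b / a) * a ^ p := by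
      field_simp
      linear_combination b * hpow
    nlinarith [hB2, hpow, hpow2, mul_pos hapos hap]

theorem stmt0 (x y p : ℝ) (hx : 0 ≤ x) (hy : 0 ≤ y) (hp : 2 ≤ p) :
    |x ^ p - y ^ p| ≤ p * |x - y| * Real.sqrt (x ^ (2 * p - 2) + y ^ (2 * p - 2)) := by
  have hp1 : 1 ≤ p := by linarith
  -- helper: for b ≤ a, a^(p-1) ≤ sqrt(a^(2p-2) + b^(2p-2))
  have sqrt_bound : ∀ a b : ℝ, 0 ≤ a → 0 ≤ b →
      a ^ (p - 1) ≤ Real.sqrt (a ^ (2 * p - 2) + b ^ (2 * p - 2)) := by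
    intro a b ha hb
    have hsq : (a ^ (p - 1)) ^ 2 = a ^ (2 * p - 2) := by
      rw [← Real.rpow_natCast (a ^ (p - 1)) 2, ← Real.rpow_mul ha]
      norm_num
      ring_nf
    have : a ^ (p - 1) = Real.sqrt (a ^ (2 * p - 2)) := by
      rw [← hsq, Real.sqrt_sq (Real.rpow_nonneg ha _)]
    rw [this]
    exact Real.sqrt_le_sqrt (le_add_of_nonneg_right (Real.rpow_nonneg hb _))
  have main : ∀ a b : ℝ, 0 ≤ b → b ≤ a →
      a ^ p - b ^ p ≤ p * (a - b) * Real.sqrt (a ^ (2 * p - 2) + b ^ (2 * p - 2)) := by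
    intro a b hb hba
    have ha : 0 ≤ a := hb.trans hba
    have h1 := key_ineq hp1 hb hba
    have h2 := sqrt_bound a b ha hb
    calc a ^ p - b ^ p ≤ p * a ^ (p - 1) * (a - b) := h1
      _ = p * (a - b) * a ^ (p - 1) := by ring
      _ ≤ p * (a - b) * Real.sqrt (a ^ (2 * p - 2) + b ^ (2 * p - 2)) := by
          exact mul_le_mul_of_nonneg_left h2 (mul_nonneg (by linarith) (by linarith))
  rcases le_total y x with h | h
  · have hmono : y ^ p ≤ x ^ p := Real.rpow_le_rpow hy h (by linarith)
    rw [abs_of_nonneg (by linarith), abs_of_nonneg (by linarith)]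
    exact main x y hy h
  · have hmono : x ^ p ≤ y ^ p := Real.rpow_le_rpow hx h (by linarith)
    rw [abs_of_nonpos (by linarith), abs_of_nonpos (by linarith)]
    have := main y x hx h
    rw [add_comm (x ^ (2*p-2))] at *
    linarith [this]
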